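/- Let α be a finite type, let g : α → α → Bool be regular with respect to a subgroup S of Equiv.Perm α × Equiv.Perm α, let m be the cardinality of S and fix an enumeration e : Fin m ≃ S. Let N = 2^n and let a, b : Fin N → (Fin n → α). If the map j ↦ (fun i => g (a j i) (b j i)) from Fin N to (Fin n → Bool) is injective (i.e. the encoded input to the Collision problem is 1-to-1), then the map (j, I) ↦ Unfold(a j, b j)(I), from Fin N × (Fin n → Fin m) to (Fin n → α) × (Fin n → α), is injective. -/
import Mathlib


/-- A bipartite Boolean function `g` is regular with respect to a subgroup `S` of
`Equiv.Perm α × Equiv.Perm α` if the coordinatewise action of `S` preserves `g` and `S`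
acts simply transitively on each fiber of `g`. -/
def IsRegularGadget {α : Type*} (g : α → α → Bool)
    (S : Subgroup (Equiv.Perm α × Equiv.Perm α)) : Prop :=
  (∀ s ∈ S, ∀ x y : α, g (s.1 x) (s.2 y) = g x y) ∧
  (∀ x₁ y₁ x₂ y₂ : α, g x₁ y₁ = g x₂ y₂ →
    ∃! s : S, ((s : Equiv.Perm α × Equiv.Perm α).1 x₁,
               (s : Equiv.Perm α × Equiv.Perm α).2 y₁) = (x₂, y₂))

/-- The `Unfold` map: given an enumeration `e : Fin m ≃ S` of the symmetry group and an
input `(a, b)` to `g^n`, it sends an index tuple `I : Fin n → Fin m` to the input to `g^n`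
obtained by applying the `I i`-th symmetry in the `i`-th coordinate. -/
def Unfold {α : Type*} {S : Subgroup (Equiv.Perm α × Equiv.Perm α)} {m n : ℕ}
    (e : Fin m ≃ S) (a b : Fin n → α) (I : Fin n → Fin m) :
    (Fin n → α) × (Fin n → α) :=
  (fun i => (e (I i) : Equiv.Perm α × Equiv.Perm α).1 (a i),
   fun i => (e (I i) : Equiv.Perm α × Equiv.Perm α).2 (b i))

/-- If the encoded input `j ↦ g^n(a j, b j)` to the Collision problem is 1-to-1, then the
combined map `(j, I) ↦ Unfold (a j, b j) I` produces a 1-to-1 list. -/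
theorem unfold_one_to_one {α : Type*} [Fintype α]
    (g : α → α → Bool) (S : Subgroup (Equiv.Perm α × Equiv.Perm α))
    (hreg : IsRegularGadget g S) {m n N : ℕ} (hN : N = 2 ^ n) (e : Fin m ≃ S)
    (a b : Fin N → (Fin n → α))
    (hinj : Function.Injective (fun j : Fin N => fun i => g (a j i) (b j i))) :
    Function.Injective
      (fun jI : Fin N × (Fin n → Fin m) => Unfold e (a jI.1) (b jI.1) jI.2) := by
  obtain ⟨hpres, htrans⟩ := hreg
  rintro ⟨j₁, I₁⟩ ⟨j₂, I₂⟩ h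
  simp only [Unfold, Prod.mk.injEq, funext_iff] at h
  obtain ⟨h1, h2⟩ := h
  have hj : j₁ = j₂ := by
    apply hinj
    funext i
    calc g (a j₁ i) (b j₁ i)
        = g ((e (I₁ i) : Equiv.Perm α × Equiv.Perm α).1 (a j₁ i))
            ((e (I₁ i) : Equiv.Perm α × Equiv.Perm α).2 (b j₁ i)) :=
          (hpres _ (e (I₁ i)).2 _ _).symm
      _ = g ((e (I₂ i) : Equiv.Perm α × Equiv.Perm α).1 (a j₂ i))
            ((e (I₂ i) : Equiv.Perm α × Equiv.Perm α).2 (b j₂ i)) := by rw [h1 i, h2 i]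
      _ = g (a j₂ i) (b j₂ i) := hpres _ (e (I₂ i)).2 _ _
  subst hj
  suffices hI : I₁ = I₂ by simp [hI]
  funext i
  have key := htrans (a j₁ i) (b j₁ i)
      ((e (I₁ i) : Equiv.Perm α × Equiv.Perm α).1 (a j₁ i))
      ((e (I₁ i) : Equiv.Perm α × Equiv.Perm α).2 (b j₁ i))
      ((hpres _ (e (I₁ i)).2 _ _).symm)
  obtain ⟨s, -, huniq⟩ := key
  have e1 : e (I₁ i) = s := huniq _ rfl
  have e2 : e (I₂ i) = s := huniq _ (by simp only [← h1 i, ← h2 i])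
  exact e.injective (e1.trans e2.symm)
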